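/- Let (X, μ) be a finite measure space, w : X → (0,∞) measurable with ∫ w dμ < ∞, and a > 0. Then for every measurable probability density f : X → (0,∞) (i.e., f > 0 a.e. and ∫ f dμ = 1), one has ∫ w(x) f(x)^(-a) dμ(x) ≥ (∫ w(x)^(1/(a+1)) dμ(x))^(a+1). -/

import Mathlib

open MeasureTheory Filter

/-- Hölder lower bound: for a finite measure `μ`, a positive integrable weight `w`,
`a > 0`, and any probability density `f`, one has
`∫ w f^(-a) dμ ≥ (∫ w^(1/(a+1)) dμ)^(a+1)`. -/
theorem stmt_0 {X : Type*} [MeasurableSpace X] (μ : Measure X) [IsFiniteMeasure μ]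
    (w : X → ℝ) (hw_meas : Measurable w) (hw_pos : ∀ x, 0 < w x)
    (hw_int : Integrable w μ) (a : ℝ) (ha : 0 < a)
    (f : X → ℝ) (hf_meas : Measurable f) (hf_pos : ∀ᵐ x ∂μ, 0 < f x)
    (hf_int : ∫ x, f x ∂μ = 1) :
    ENNReal.ofReal ((∫ x, w x ^ (1 / (a + 1)) ∂μ) ^ (a + 1)) ≤
      ∫⁻ x, ENNReal.ofReal (w x * f x ^ (-a)) ∂μ := by
  have hp1 : (1 : ℝ) < a + 1 := by linarith
  have hp0 : (0 : ℝ) < a + 1 := by linarith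
  have hf_intg : Integrable f μ := by
    by_contra h
    rw [integral_undef h] at hf_int
    norm_num at hf_int
  -- conjugate exponents
  have hpq : (a + 1).HolderConjugate ((a + 1) / a) := by
    rw [Real.holderConjugate_iff_eq_conjExponent hp1]
    ring
  set G : X → ENNReal := fun x => ENNReal.ofReal (w x * f x ^ (-a)) with hGdef
  set F : X → ENNReal := fun x => ENNReal.ofReal (f x) with hFdef
  have hGmeas0 : Measurable G := by
    simp only [hGdef]
    have : Measurable (fun x => f x ^ (-a)) := by measurability
    exact (hw_meas.mul this).ennreal_ofReal
  have hGmeas : AEMeasurable (fun x => G x ^ (1 / (a + 1))) μ :=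
    (hGmeas0.pow_const _).aemeasurable
  have hFmeas : AEMeasurable (fun x => F x ^ (a / (a + 1))) μ :=
    (hf_meas.ennreal_ofReal.pow_const _).aemeasurable
  -- Hölder
  have holder := ENNReal.lintegral_mul_le_Lp_mul_Lq μ hpq hGmeas hFmeas
  -- simplify exponents in Hölder
  have hGpow : ∀ x, (G x ^ (1 / (a + 1))) ^ (a + 1) = G x := by
    intro x
    rw [← ENNReal.rpow_mul, one_div, inv_mul_cancel₀ (ne_of_gt hp0), ENNReal.rpow_one]
  have hFpow : ∀ x, (F x ^ (a / (a + 1))) ^ ((a + 1) / a) = F x := by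
    intro x
    rw [← ENNReal.rpow_mul]
    rw [div_mul_div_comm]
    rw [mul_comm a (a+1), div_self (by positivity), ENNReal.rpow_one]
  simp only [hGpow, hFpow] at holder
  -- ∫⁻ F = 1
  have hFint : ∫⁻ x, F x ∂μ = 1 := by
    rw [← ofReal_integral_eq_lintegral_ofReal hf_intg (hf_pos.mono fun x h => h.le), hf_int,
      ENNReal.ofReal_one]
  rw [hFint, ENNReal.one_rpow, mul_one] at holder
  -- pointwise identity a.e.: G^(1/(a+1)) * F^(a/(a+1)) = ofReal (w x) ^ (1/(a+1))
  have hae : ∀ᵐ x ∂μ, (fun x => G x ^ (1 / (a + 1))) x * (fun x => F x ^ (a / (a + 1))) x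
      = ENNReal.ofReal (w x ^ (1 / (a + 1))) := by
    filter_upwards [hf_pos] with x hfx
    have hwx := hw_pos x
    simp only [hGdef, hFdef]
    have hfa : (0:ℝ) < f x ^ (-a) := Real.rpow_pos_of_pos hfx _
    rw [ENNReal.ofReal_rpow_of_pos (by positivity : (0:ℝ) < w x * f x ^ (-a)),
      ENNReal.ofReal_rpow_of_pos hfx, ← ENNReal.ofReal_mul (by positivity)]
    congr 1
    rw [Real.mul_rpow hwx.le hfa.le, ← Real.rpow_mul hfx.le, mul_assoc,
      ← Real.rpow_add hfx]
    rw [show -a * (1 / (a + 1)) + a / (a + 1) = 0 by ring, Real.rpow_zero, mul_one]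
  have hW : ∫⁻ x, ENNReal.ofReal (w x ^ (1 / (a + 1))) ∂μ ≤
      (∫⁻ x, G x ∂μ) ^ (1 / (a + 1)) := by
    calc ∫⁻ x, ENNReal.ofReal (w x ^ (1 / (a + 1))) ∂μ
        = ∫⁻ x, ((fun x => G x ^ (1 / (a + 1))) * fun x => F x ^ (a / (a + 1))) x ∂μ := by
          refine lintegral_congr_ae ?_
          filter_upwards [hae] with x hx
          exact hx.symm
      _ ≤ _ := holder
  -- now handle LHS
  have hwint' : Integrable (fun x => w x ^ (1 / (a + 1))) μ := by
    have hb : ∀ x, ‖w x ^ (1 / (a + 1))‖ ≤ ‖1 + w x‖ := by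
      intro x
      have hwx := hw_pos x
      rw [Real.norm_of_nonneg (Real.rpow_nonneg hwx.le _),
        Real.norm_of_nonneg (by linarith)]
      rcases le_total (w x) 1 with h | h
      · have : w x ^ (1 / (a + 1)) ≤ 1 := by
          calc w x ^ (1 / (a + 1)) ≤ 1 ^ (1 / (a + 1)) :=
                Real.rpow_le_rpow hwx.le h (by positivity)
            _ = 1 := Real.one_rpow _
        linarith
      · have : w x ^ (1 / (a + 1)) ≤ w x ^ (1 : ℝ) := by
          apply Real.rpow_le_rpow_of_exponent_le h
          rw [div_le_one hp0]; linarith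
        rw [Real.rpow_one] at this
        linarith
    exact Integrable.mono ((integrable_const 1).add hw_int)
      ((by measurability : Measurable fun x => w x ^ (1 / (a + 1))).aestronglyMeasurable) (Filter.Eventually.of_forall hb)
  have hWeq : ENNReal.ofReal (∫ x, w x ^ (1 / (a + 1)) ∂μ)
      = ∫⁻ x, ENNReal.ofReal (w x ^ (1 / (a + 1))) ∂μ :=
    ofReal_integral_eq_lintegral_ofReal hwint'
      (Filter.Eventually.of_forall fun x => Real.rpow_nonneg (hw_pos x).le _)
  have hInn : (0:ℝ) ≤ ∫ x, w x ^ (1 / (a + 1)) ∂μ :=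
    integral_nonneg fun x => Real.rpow_nonneg (hw_pos x).le _
  calc ENNReal.ofReal ((∫ x, w x ^ (1 / (a + 1)) ∂μ) ^ (a + 1))
      = (ENNReal.ofReal (∫ x, w x ^ (1 / (a + 1)) ∂μ)) ^ (a + 1) :=
        (ENNReal.ofReal_rpow_of_nonneg hInn hp0.le).symm
    _ = (∫⁻ x, ENNReal.ofReal (w x ^ (1 / (a + 1))) ∂μ) ^ (a + 1) := by rw [hWeq]
    _ ≤ ((∫⁻ x, G x ∂μ) ^ (1 / (a + 1))) ^ (a + 1) :=
        ENNReal.rpow_le_rpow hW hp0.le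
    _ = ∫⁻ x, G x ∂μ := by
        rw [← ENNReal.rpow_mul, one_div, inv_mul_cancel₀ hp0.ne', ENNReal.rpow_one]
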